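/- For any acyclic reorientation R of tc(D), with asour_R the induced sourcing of P(D) (sending each path to its source in R), we have orn_R = orn_{asour_R}. -/

import Mathlib

/-- A directed path from `u` to `v` in the digraph `D` using only vertices of `U`. -/
def pathIn {V : Type*} (D : V → V → Prop) (U : Set V) (u v : V) : Prop :=
  Relation.ReflTransGen (fun a b => D a b ∧ a ∈ U ∧ b ∈ U) u v

/-- An ornament of `D` at `v`. -/
def IsOrnament {V : Type*} (D : V → V → Prop) (v : V) (U : Set V) : Prop :=
  v ∈ U ∧ ∀ u ∈ U, pathIn D U u v

/-- The inclusion maximal ornament of `D` at `v` contained in `X`. -/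
def maxOrnIn {V : Type*} (D : V → V → Prop) (v : V) (X : Set V) : Set V :=
  ⋃₀ {U | IsOrnament D v U ∧ U ⊆ X}

/-- The ornamentation associated to a reversed edge set `rev`. -/
def ornOfRev {V : Type*} (D rev : V → V → Prop) (v : V) : Set V :=
  maxOrnIn D v {u | Relation.ReflTransGen rev u v}

/-- `IsPathSet D P u v` : `P` is the vertex set of a directed path in `D` from `u` to `v`. -/
inductive IsPathSet {V : Type*} (D : V → V → Prop) : Set V → V → V → Prop
  | single (v : V) : IsPathSet D {v} v v
  | cons {u w v : V} {P : Set V} :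
      D u w → IsPathSet D P w v → u ∉ P → IsPathSet D (insert u P) u v

/-- The path hypergraph of `D`. -/
def PathHyp {V : Type*} (D : V → V → Prop) : Set (Set V) :=
  {P | ∃ u v, IsPathSet D P u v}

/-- `rev(S)`: pairs `(u,v)` such that some directed path `P` from `u` to `v` has `S P = v`. -/
def revOfSourcing {V : Type*} (D : V → V → Prop) (S : Set V → V) : V → V → Prop :=
  fun u v => ∃ P, IsPathSet D P u v ∧ S P = v

/-- The reorientation of `tcD` with reversed edge set `rev`. -/
def reorient {V : Type*} (tcD rev : V → V → Prop) : V → V → Prop :=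
  fun u v => (tcD u v ∧ ¬ rev u v) ∨ (tcD v u ∧ rev v u)

/-- A relation is acyclic if it has no directed cycle. -/
def AcyclicRel {V : Type*} (R : V → V → Prop) : Prop :=
  ∀ v, ¬ Relation.TransGen R v v

/- ### Auxiliary lemmas -/

lemma IsPathSet.mem_left {V : Type*} {D : V → V → Prop} {P : Set V} {u v : V}
    (h : IsPathSet D P u v) : u ∈ P := by
  induction h with
  | single v => exact rfl
  | cons _ _ _ _ => exact Set.mem_insert _ _

lemma IsPathSet.mem_right {V : Type*} {D : V → V → Prop} {P : Set V} {u v : V}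
    (h : IsPathSet D P u v) : v ∈ P := by
  induction h with
  | single v => exact rfl
  | cons _ _ _ ih => exact Set.mem_insert_of_mem _ ih

lemma IsPathSet.eq_or_transGen {V : Type*} {D : V → V → Prop} {P : Set V} {u v : V}
    (h : IsPathSet D P u v) : u = v ∨ Relation.TransGen D u v := by
  induction h with
  | single v => exact Or.inl rfl
  | cons hd _ _ ih =>
    right
    rcases ih with rfl | ih
    · exact Relation.TransGen.single hd
    · exact Relation.TransGen.head hd ih

lemma transGen_lt {n : ℕ} {D : Fin n → Fin n → Prop} (hD : ∀ u v, D u v → u < v)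
    {u v : Fin n} (h : Relation.TransGen D u v) : u < v := by
  induction h with
  | single h => exact hD _ _ h
  | tail _ h ih => exact ih.trans (hD _ _ h)

lemma IsPathSet.le_of_mem {n : ℕ} {D : Fin n → Fin n → Prop} (hD : ∀ u v, D u v → u < v)
    {P : Set (Fin n)} {u v : Fin n} (h : IsPathSet D P u v) : ∀ x ∈ P, u ≤ x := by
  induction h with
  | single v => rintro x rfl; exact le_refl _
  | cons hd _ _ ih =>
    rintro x (rfl | hx)
    · exact le_refl _
    · exact (hD _ _ hd).le.trans (ih x hx)

/-- From a `pathIn` within `U`, extract a genuine path set contained in `U`. -/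
lemma exists_pathSet {n : ℕ} {D : Fin n → Fin n → Prop} (hD : ∀ u v, D u v → u < v)
    {U : Set (Fin n)} {u v : Fin n} (h : pathIn D U u v) (hu : u ∈ U) :
    ∃ P, IsPathSet D P u v ∧ P ⊆ U := by
  unfold pathIn at h
  induction h using Relation.ReflTransGen.head_induction_on with
  | refl => exact ⟨{v}, IsPathSet.single v, by simpa using hu⟩
  | head hab _ ih =>
    obtain ⟨hDab, _, hbU⟩ := hab
    obtain ⟨P, hP, hPU⟩ := ih hbU
    have hnot : _root_.id (by rename_i a b _ _; exact a) ∉ P := by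
      intro hmem
      exact absurd (hP.le_of_mem hD _ hmem) (not_le.mpr (hD _ _ hDab))
    exact ⟨insert _ P, IsPathSet.cons hDab hP hnot, Set.insert_subset hu hPU⟩

theorem ornOfRev_eq_ornOfAsour {n : ℕ} (D : Fin n → Fin n → Prop)
    (hD : ∀ u v, D u v → u < v) (rev : Fin n → Fin n → Prop)
    (hsub : ∀ u v, rev u v → Relation.TransGen D u v)
    (hacyc : AcyclicRel (reorient (Relation.TransGen D) rev))
    (S : Set (Fin n) → Fin n)
    (hS : ∀ P ∈ PathHyp D, S P ∈ P ∧
      ∀ w ∈ P, w ≠ S P → reorient (Relation.TransGen D) rev (S P) w) :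
    ornOfRev D rev = ornOfRev D (revOfSourcing D S) := by
  funext v
  -- `revOfSourcing` is contained in `rev` up to diagonal
  have hrevS : ∀ a b : Fin n, revOfSourcing D S a b → Relation.ReflTransGen rev a b := by
    rintro a b ⟨P, hP, hSP⟩
    rcases hP.eq_or_transGen with rfl | htg
    · exact Relation.ReflTransGen.refl
    · -- a < b from the path; use hS to show rev a b
      have hab : a < b := transGen_lt hD htg
      have haP : a ∈ P := hP.mem_left
      have hane : a ≠ S P := by rw [hSP]; exact hab.ne
      have hR := (hS P ⟨a, b, hP⟩).2 a haP hane
      rw [hSP] at hR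
      rcases hR with ⟨htc, _⟩ | ⟨_, hr⟩
      · exact absurd (transGen_lt hD htc) (not_lt.mpr hab.le)
      · exact Relation.ReflTransGen.single hr
  apply Set.Subset.antisymm
  · -- orn_R ⊆ orn_S : the whole set W := orn_R v is an ornament contained in X_S
    set W := ornOfRev D rev v with hW
    have hWXR : W ⊆ {u | Relation.ReflTransGen rev u v} :=
      Set.sUnion_subset fun U hU => hU.2
    have hWorn : IsOrnament D v W := by
      constructor
      · exact ⟨{v}, ⟨⟨rfl, by rintro u rfl; exact Relation.ReflTransGen.refl⟩,
          by rintro u rfl; exact Relation.ReflTransGen.refl⟩, rfl⟩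
      · rintro u ⟨U, ⟨hUorn, hUX⟩, huU⟩
        have hsubW : U ⊆ W := Set.subset_sUnion_of_mem ⟨hUorn, hUX⟩
        exact Relation.ReflTransGen.mono
          (fun a b ⟨h1, h2, h3⟩ => ⟨h1, hsubW h2, hsubW h3⟩) _ _ (hUorn.2 u huU)
    -- every u ∈ W satisfies revOfSourcing D S u v
    have hkey : ∀ u ∈ W, revOfSourcing D S u v := by
      intro u hu
      obtain ⟨P, hP, hPW⟩ := exists_pathSet hD (hWorn.2 u hu) hu
      have hPH : P ∈ PathHyp D := ⟨u, v, hP⟩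
      obtain ⟨hsP, hsrc⟩ := hS P hPH
      by_cases hsv : S P = v
      · exact ⟨P, hP, hsv⟩
      · exfalso
        have hRv := hsrc v hP.mem_right (fun h => hsv h.symm)
        have hsX : Relation.ReflTransGen rev (S P) v := hWXR (hPW hsP)
        rcases (Relation.reflTransGen_iff_eq_or_transGen.mp hsX) with heq | htg
        · exact hsv heq.symm
        · have hRvs : Relation.TransGen (reorient (Relation.TransGen D) rev) v (S P) := by
            have : ∀ a b : Fin n, rev a b → reorient (Relation.TransGen D) rev b a :=
              fun a b hr => Or.inr ⟨hsub a b hr, hr⟩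
            exact (Relation.TransGen.mono (fun a b h => this a b h) _ _ htg).swap
          exact hacyc v (hRvs.tail hRv)
    have hWmem : W ∈ {U | IsOrnament D v U ∧
        U ⊆ {u | Relation.ReflTransGen (revOfSourcing D S) u v}} :=
      ⟨hWorn, fun u hu => Relation.ReflTransGen.single (hkey u hu)⟩
    exact Set.subset_sUnion_of_mem hWmem
  · -- orn_S ⊆ orn_R
    apply Set.sUnion_subset
    rintro U ⟨hUorn, hUX⟩
    apply Set.subset_sUnion_of_mem
    have hmono : ∀ {a b : Fin n}, Relation.ReflTransGen (revOfSourcing D S) a b →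
        Relation.ReflTransGen rev a b := by
      intro a b h
      induction h with
      | refl => exact Relation.ReflTransGen.refl
      | tail _ hstep ih => exact ih.trans (hrevS _ _ hstep)
    exact ⟨hUorn, fun u hu => hmono (hUX hu)⟩
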